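/- Let n be an odd positive integer and A a finite abelian group whose exponent divides n. Then H²(A, ℤ/n) (group cohomology with trivial coefficients) is isomorphic, as an Aut(A)-module, to Hom(A, ℤ/n) × (Hom(A ⊗ A, ℤ/n) / Sym), where Sym denotes the subgroup of symmetric bilinear homomorphisms. The first factor maps in via the Bockstein homomorphism applied to H¹(A,ℤ/n) = Hom(A, ℤ/n), and the second factor maps in by regarding a bilinear form as a 2-cocycle. -/

import Mathlib

namespace Stmt3

variable {A : Type*} [AddCommGroup A] {n : ℕ}

/-- group 2-cocycles of an abelian group with trivial `ℤ/n`-coefficients -/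
def IsCocycle2 (c : A → A → ZMod n) : Prop :=
  ∀ a b d : A, c b d - c (a + b) d + c a (b + d) - c a b = 0

/-- group 2-coboundaries -/
def IsCoboundary2 (c : A → A → ZMod n) : Prop :=
  ∃ g : A → ZMod n, ∀ a b : A, c a b = g a + g b - g (a + b)

/-- The 2-cocycle representing the Bockstein of `φ : A →+ ℤ/n`, for the coefficient
sequence `0 → ℤ/n → ℤ/n² → ℤ/n → 0`. -/
def bockstein (φ : A →+ ZMod n) : A → A → ZMod n :=
  fun a b => ((((φ a).val + (φ b).val - (φ (a + b)).val : ℤ) / (n : ℤ) : ℤ) : ZMod n)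

/-- The combined map `Hom(A, ℤ/n) × Bilin(A, ℤ/n) → Z²(A, ℤ/n)`. -/
def Phi (φ : A →+ ZMod n) (β : A →+ A →+ ZMod n) : A → A → ZMod n :=
  fun a b => bockstein φ a b + β a b

end Stmt3

namespace Aux3
open Stmt3 Finset

variable {A : Type*} [AddCommGroup A] {n : ℕ}

def eInt (φ : A →+ ZMod n) (a b : A) : ℤ :=
  ((φ a).val + (φ b).val - (φ (a + b)).val : ℤ)

lemma dvd_eInt (hn : 0 < n) (φ : A →+ ZMod n) (a b : A) : (n : ℤ) ∣ eInt φ a b := by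
  haveI : NeZero n := ⟨hn.ne'⟩
  rw [← ZMod.intCast_zmod_eq_zero_iff_dvd]
  have h1 : (((φ a).val : ℕ) : ZMod n) = φ a := ZMod.natCast_rightInverse _
  have h2 : (((φ b).val : ℕ) : ZMod n) = φ b := ZMod.natCast_rightInverse _
  have h3 : (((φ (a + b)).val : ℕ) : ZMod n) = φ (a + b) := ZMod.natCast_rightInverse _
  push_cast [eInt]
  rw [h1, h2, h3, map_add]
  ring

def kInt (φ : A →+ ZMod n) (a b : A) : ℤ := eInt φ a b / (n : ℤ)

lemma nk (hn : 0 < n) (φ : A →+ ZMod n) (a b : A) : (n : ℤ) * kInt φ a b = eInt φ a b :=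
  Int.mul_ediv_cancel' (dvd_eInt hn φ a b)

lemma bockstein_eq_k (φ : A →+ ZMod n) (a b : A) :
    bockstein φ a b = ((kInt φ a b : ℤ) : ZMod n) := rfl

lemma bockstein_cocycle (hn : 0 < n) (φ : A →+ ZMod n) : IsCocycle2 (bockstein φ) := by
  intro a b d
  have hz : (n : ℤ) ≠ 0 := by exact_mod_cast hn.ne'
  have h : kInt φ b d - kInt φ (a + b) d + kInt φ a (b + d) - kInt φ a b = 0 := by
    have hmul : (n : ℤ) * (kInt φ b d - kInt φ (a + b) d + kInt φ a (b + d) - kInt φ a b)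
        = 0 := by
      have e1 := nk hn φ b d
      have e2 := nk hn φ (a + b) d
      have e3 := nk hn φ a (b + d)
      have e4 := nk hn φ a b
      simp only [eInt, add_assoc] at e1 e2 e3 e4
      linear_combination e1 - e2 + e3 - e4
    exact (mul_eq_zero.mp hmul).resolve_left hz
  simp only [bockstein_eq_k]
  have := congrArg (fun z : ℤ => ((z : ℤ) : ZMod n)) h
  push_cast at this ⊢
  linear_combination this

lemma bockstein_symm (φ : A →+ ZMod n) (a b : A) : bockstein φ a b = bockstein φ b a := by
  simp only [bockstein, add_comm b a, add_comm ((φ a).val : ℤ) ((φ b).val : ℤ)]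

lemma bockstein_zero_right (hn : 0 < n) (φ : A →+ ZMod n) (a : A) : bockstein φ a 0 = 0 := by
  haveI : NeZero n := ⟨hn.ne'⟩
  simp [bockstein]

lemma bockstein_zero_left (hn : 0 < n) (φ : A →+ ZMod n) (b : A) : bockstein φ 0 b = 0 := by
  haveI : NeZero n := ⟨hn.ne'⟩
  simp [bockstein]

lemma d_add (c : A → A → ZMod n) (hc : IsCocycle2 c) (a b e : A) :
    c (a + b) e - c e (a + b) = (c a e - c e a) + (c b e - c e b) := by
  have h1 := hc a b e
  have h2 := hc e a b
  rw [add_comm e a] at h2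
  have h3 := hc a e b
  rw [add_comm e b] at h3
  linear_combination - h1 - h2 + h3

@[ext] structure Ety (n : ℕ) (A : Type*) where
  x : ZMod n
  a : A


def mkGrp (t : A → A → ZMod n) (hc : IsCocycle2 t) (hs : ∀ a b, t a b = t b a)
    (h0 : ∀ a, t a 0 = 0) (h0' : ∀ b, t 0 b = 0) : AddCommGroup (Ety n A) :=
  letI : Zero (Ety n A) := ⟨⟨0, 0⟩⟩
  letI : Add (Ety n A) := ⟨fun p q => ⟨p.x + q.x + t p.a q.a, p.a + q.a⟩⟩
  letI : Neg (Ety n A) := ⟨fun p => ⟨-p.x - t p.a (-p.a), -p.a⟩⟩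
  { add := (· + ·)
    zero := 0
    neg := Neg.neg
    nsmul := nsmulRec
    zsmul := zsmulRec
    add_assoc := fun p q r => by
      have h := hc p.a q.a r.a
      ext
      · show p.x + q.x + t p.a q.a + r.x + t (p.a + q.a) r.a
          = p.x + (q.x + r.x + t q.a r.a) + t p.a (q.a + r.a)
        linear_combination -h
      · exact add_assoc _ _ _
    zero_add := fun p => by
      ext
      · show 0 + p.x + t 0 p.a = p.x
        rw [h0', zero_add, add_zero]
      · exact zero_add _
    add_zero := fun p => by
      ext
      · show p.x + 0 + t p.a 0 = p.x
        rw [h0, add_zero, add_zero]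
      · exact add_zero _
    neg_add_cancel := fun p => by
      ext
      · show -p.x - t p.a (-p.a) + p.x + t (-p.a) p.a = 0
        rw [hs (-p.a) p.a]; ring
      · exact neg_add_cancel _
    add_comm := fun p q => by
      ext
      · show p.x + q.x + t p.a q.a = q.x + p.x + t q.a p.a
        rw [hs p.a q.a]; ring
      · exact add_comm _ _ }

section
variable (t : A → A → ZMod n) (hc : IsCocycle2 t) (hs : ∀ a b, t a b = t b a)
    (h0 : ∀ a, t a 0 = 0) (h0' : ∀ b, t 0 b = 0)

lemma mkGrp_add (p q : Ety n A) :
    (letI := mkGrp t hc hs h0 h0'; p + q) = ⟨p.x + q.x + t p.a q.a, p.a + q.a⟩ := by with_unfolding_all rfl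

lemma mkGrp_zero : (letI := mkGrp t hc hs h0 h0'; (0 : Ety n A)) = ⟨0, 0⟩ := by with_unfolding_all rfl

lemma mkGrp_nsmul1 (k : ℕ) (a : A) :
    (letI := mkGrp t hc hs h0 h0'; k • (⟨0, a⟩ : Ety n A))
      = ⟨∑ j ∈ range k, t a (j • a), k • a⟩ := by
  letI := mkGrp t hc hs h0 h0'
  induction k with
  | zero => rw [zero_nsmul, zero_nsmul, mkGrp_zero]; simp
  | succ k ih =>
      rw [succ_nsmul, ih, mkGrp_add]
      ext
      · show (∑ j ∈ range k, t a (j • a)) + 0 + t (k • a) a = ∑ j ∈ range (k + 1), t a (j • a)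
        rw [Finset.sum_range_succ, hs (k • a) a, add_zero]
      · show k • a + a = (k + 1) • a
        rw [succ_nsmul]

lemma mkGrp_nsmul2 (k : ℕ) (x : ZMod n) :
    (letI := mkGrp t hc hs h0 h0'; k • (⟨x, 0⟩ : Ety n A)) = ⟨k • x, 0⟩ := by
  letI := mkGrp t hc hs h0 h0'
  induction k with
  | zero => rw [zero_nsmul, zero_nsmul, mkGrp_zero]
  | succ k ih =>
      rw [succ_nsmul, ih, mkGrp_add]
      ext
      · show k • x + x + t 0 0 = (k + 1) • x
        rw [h0, succ_nsmul, add_zero]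
      · show (0 : A) + 0 = 0
        rw [add_zero]
end

def Tmap (c : A → A → ZMod n) (a : A) : ZMod n := ∑ j ∈ Finset.range n, c a (j • a)

lemma zchar (x : ZMod n) : n • x = 0 := by
  rw [nsmul_eq_mul, ZMod.natCast_self, zero_mul]

section
variable (hn : 0 < n) (hexp : ∀ a : A, n • a = 0)
    (t : A → A → ZMod n) (hc : IsCocycle2 t) (hs : ∀ a b, t a b = t b a)
    (h0 : ∀ a, t a 0 = 0) (h0' : ∀ b, t 0 b = 0)

include hexp hc hs h0 h0' in
lemma Tmap_add (a b : A) : Tmap t (a + b) = Tmap t a + Tmap t b := by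
  letI := mkGrp t hc hs h0 h0'
  have e1 : (⟨0, a⟩ + ⟨0, b⟩ : Ety n A) = ⟨t a b, a + b⟩ := by
    rw [mkGrp_add]; simp
  have e2 : (⟨t a b, a + b⟩ : Ety n A) = ⟨t a b, 0⟩ + ⟨0, a + b⟩ := by
    rw [mkGrp_add]; simp [h0']
  have h3 : n • (⟨0, a⟩ + ⟨0, b⟩ : Ety n A) = ⟨Tmap t a + Tmap t b, 0⟩ := by
    rw [smul_add, mkGrp_nsmul1, mkGrp_nsmul1, mkGrp_add]
    ext
    · show Tmap t a + Tmap t b + t (n • a) (n • b) = Tmap t a + Tmap t b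
      rw [hexp a, h0', add_zero]
    · show n • a + n • b = 0
      rw [hexp, hexp, add_zero]
  have h4 : n • (⟨0, a⟩ + ⟨0, b⟩ : Ety n A) = ⟨Tmap t (a + b), 0⟩ := by
    rw [e1, e2, smul_add, mkGrp_nsmul1, mkGrp_nsmul2, mkGrp_add]
    ext
    · show n • t a b + Tmap t (a + b) + t 0 (n • (a + b)) = Tmap t (a + b)
      rw [zchar, hexp, h0 0, zero_add, add_zero]
    · show (0 : A) + n • (a + b) = 0
      rw [hexp, add_zero]
  have := h3.symm.trans h4
  exact (congrArg Ety.x this).symm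

include hn hexp hc hs h0 h0' in
lemma split (hT : ∀ a, Tmap t a = 0) :
    ∃ g : A → ZMod n, ∀ a b : A, t a b = g a + g b - g (a + b) := by
  haveI : NeZero n := ⟨hn.ne'⟩
  letI := mkGrp t hc hs h0 h0'
  have hexpE : ∀ p : Ety n A, n • p = 0 := by
    intro p
    have hp : p = ⟨p.x, 0⟩ + ⟨0, p.a⟩ := by
      rw [mkGrp_add]; ext
      · show p.x = p.x + 0 + t 0 p.a
        rw [h0', add_zero, add_zero]
      · show p.a = 0 + p.a
        rw [zero_add]
    rw [hp, smul_add, mkGrp_nsmul1, mkGrp_nsmul2, mkGrp_add, mkGrp_zero]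
    ext
    · show n • p.x + (∑ j ∈ Finset.range n, t p.a (j • p.a)) + t 0 (n • p.a) = 0
      have : (∑ j ∈ Finset.range n, t p.a (j • p.a)) = Tmap t p.a := rfl
      rw [this, hT, zchar, hexp, h0 0, zero_add, add_zero]
    · show (0 : A) + n • p.a = 0
      rw [hexp, add_zero]
  haveI : Module (ZMod n) (Ety n A) := AddCommGroup.zmodModule hexpE
  haveI : IsPrincipalIdealRing (ZMod n) :=
    IsPrincipalIdealRing.of_surjective (Int.castRingHom (ZMod n)) ZMod.intCast_surjective
  -- Baer criterion for ZMod n over itself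
  have crux : ∀ a y : ZMod n, (∀ u : ZMod n, u * a = 0 → u * y = 0) → ∃ z : ZMod n, y = z * a := by
    intro a y h
    set d := Nat.gcd a.val n with hd
    have hdn : d ∣ n := Nat.gcd_dvd_right _ _
    have hda : d ∣ a.val := Nat.gcd_dvd_left _ _
    have hdpos : 0 < d := Nat.gcd_pos_of_pos_right _ hn
    have hvala : ((a.val : ℕ) : ZMod n) = a := ZMod.natCast_rightInverse _
    have hvaly : ((y.val : ℕ) : ZMod n) = y := ZMod.natCast_rightInverse _
    have hu : ((n / d : ℕ) : ZMod n) * a = 0 := by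
      rw [← hvala, ← Nat.cast_mul, ZMod.natCast_eq_zero_iff]
      obtain ⟨s, hs⟩ := hda
      exact ⟨s, by rw [hs, ← mul_assoc, Nat.div_mul_cancel hdn]⟩
    have h2 : (n : ℕ) ∣ (n / d) * y.val := by
      have := h _ hu
      rw [← hvaly, ← Nat.cast_mul, ZMod.natCast_eq_zero_iff] at this
      exact this
    have h3 : d ∣ y.val := by
      obtain ⟨s, hs⟩ := h2
      have hndpos : 0 < n / d := Nat.div_pos (Nat.le_of_dvd hn hdn) hdpos
      have hnd : d * (n / d) = n := Nat.mul_div_cancel' hdn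
      have heq : (n / d) * y.val = (n / d) * (d * s) := by
        calc (n / d) * y.val = n * s := hs
          _ = (d * (n / d)) * s := by rw [hnd]
          _ = (n / d) * (d * s) := by ring
      exact ⟨s, Nat.eq_of_mul_eq_mul_left hndpos heq⟩
    have hbez : (d : ZMod n) = a * ((Nat.gcdA a.val n : ℤ) : ZMod n) := by
      have hb := Nat.gcd_eq_gcd_ab a.val n
      have : ((d : ℤ) : ZMod n) = (((a.val : ℤ) * Nat.gcdA a.val n + (n : ℤ) * Nat.gcdB a.val n : ℤ) : ZMod n) := by
        rw [← hb]
      push_cast at this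
      rw [hvala] at this
      simpa using this
    obtain ⟨s, hs⟩ := h3
    refine ⟨(s : ZMod n) * ((Nat.gcdA a.val n : ℤ) : ZMod n), ?_⟩
    rw [← hvaly, hs]
    push_cast
    rw [hbez]
    ring
  have baer : Module.Baer (ZMod n) (ZMod n) := by
    intro I g
    obtain ⟨a, rfl⟩ := Submodule.IsPrincipal.principal I
    have haI : a ∈ Submodule.span (ZMod n) {a} := Submodule.mem_span_singleton_self a
    obtain ⟨z, hz⟩ := crux a (g ⟨a, haI⟩) (by
      intro u hu
      have h1 : (⟨u • a, Submodule.smul_mem _ u haI⟩ : Submodule.span (ZMod n) {a})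
          = u • (⟨a, haI⟩ : Submodule.span (ZMod n) {a}) := rfl
      have h2 : u • a = (0 : ZMod n) := by rw [smul_eq_mul]; exact hu
      have : (⟨u • a, Submodule.smul_mem _ u haI⟩ : Submodule.span (ZMod n) {a}) = 0 :=
        Subtype.ext h2
      calc u * g ⟨a, haI⟩ = u • g ⟨a, haI⟩ := rfl
        _ = g (u • ⟨a, haI⟩) := (map_smul g u _).symm
        _ = g 0 := by rw [← h1, this]
        _ = 0 := map_zero g)
    refine ⟨z • LinearMap.id, ?_⟩
    intro x mem
    obtain ⟨c, hc⟩ := Submodule.mem_span_singleton.mp mem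
    have h1 : (⟨x, mem⟩ : Submodule.span (ZMod n) {a}) = c • ⟨a, haI⟩ :=
      Subtype.ext hc.symm
    rw [h1, map_smul]
    simp only [LinearMap.smul_apply, LinearMap.id_apply, smul_eq_mul]
    rw [hz, ← hc]
    simp only [smul_eq_mul]
    ring
  -- the embedding ι : ZMod n →ₗ Ety n A
  have hadd' : ∀ x y : ZMod n, (⟨x, 0⟩ + ⟨y, 0⟩ : Ety n A) = ⟨x + y, 0⟩ := by
    intro x y; rw [mkGrp_add]; ext
    · show x + y + t 0 0 = x + y
      rw [h0 0, add_zero]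
    · show (0 : A) + 0 = 0
      rw [add_zero]
  let ιa : ZMod n →+ Ety n A := AddMonoidHom.mk' (fun x => ⟨x, 0⟩) (by
    intro x y; rw [hadd' x y])
  let ι : ZMod n →ₗ[ZMod n] Ety n A := ιa.toZModLinearMap n
  have ιinj : Function.Injective ⇑ι := by
    intro x y hxy
    exact congrArg Ety.x hxy
  obtain ⟨r, hr⟩ := baer.extension_property ι ιinj LinearMap.id
  have hrι : ∀ x : ZMod n, r ⟨x, 0⟩ = x := by
    intro x
    have := congrArg (fun f => f x) hr
    have h' : r (ι x) = x := by simpa using this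
    exact h'
  refine ⟨fun a => r ⟨0, a⟩, ?_⟩
  intro a b
  have e : (⟨0, a⟩ + ⟨0, b⟩ : Ety n A) = (⟨t a b, 0⟩ : Ety n A) + ⟨0, a + b⟩ := by
    rw [mkGrp_add, mkGrp_add]; ext
    · show 0 + 0 + t a b = t a b + 0 + t 0 (a + b)
      rw [h0' (a + b)]; ring
    · show a + b = 0 + (a + b)
      rw [zero_add]
  have := congrArg r e
  rw [map_add, map_add, hrι] at this
  linear_combination -this
end

lemma Tmap_sub (c₁ c₂ : A → A → ZMod n) (a : A) :
    Tmap (fun a b => c₁ a b - c₂ a b) a = Tmap c₁ a - Tmap c₂ a := by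
  simp only [Tmap]; rw [Finset.sum_sub_distrib]

lemma Tmap_coboundary (hexp : ∀ a : A, n • a = 0) (g : A → ZMod n) (a : A) :
    Tmap (fun a b => g a + g b - g (a + b)) a = 0 := by
  have hstep : ∀ j : ℕ, a + j • a = (j + 1) • a := by
    intro j; rw [succ_nsmul, add_comm]
  simp only [Tmap]
  calc ∑ j ∈ range n, (g a + g (j • a) - g (a + j • a))
      = ∑ j ∈ range n, (g a + (g (j • a) - g ((j + 1) • a))) := by
        apply Finset.sum_congr rfl; intro j _; rw [hstep j]; ring
    _ = n • g a + (g (0 • a) - g (n • a)) := by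
        rw [Finset.sum_add_distrib, Finset.sum_const, card_range, Finset.sum_range_sub']
    _ = 0 := by rw [zchar, hexp, zero_nsmul, sub_self, add_zero]

lemma Tmap_bilin (hodd : Odd n) (hexp : ∀ a : A, n • a = 0) (β : A →+ A →+ ZMod n) (a : A) :
    Tmap (fun a b => β a b) a = 0 := by
  obtain ⟨m, hm⟩ := hodd
  have hsum : ∑ j ∈ range n, j = n * m := by
    have h2 := Finset.sum_range_id_mul_two n
    have h3 : n - 1 = 2 * m := by omega
    rw [h3] at h2
    have h4 : (∑ j ∈ range n, j) * 2 = (n * m) * 2 := by rw [h2]; ring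
    exact Nat.eq_of_mul_eq_mul_right two_pos h4
  have hz : (∑ j ∈ range n, j) • a = 0 := by
    rw [hsum, mul_nsmul, hexp, smul_zero]
  simp only [Tmap]
  rw [← map_sum (β a), ← Finset.sum_smul, hz, map_zero]

lemma Tmap_bockstein (hn : 0 < n) (hexp : ∀ a : A, n • a = 0) (φ : A →+ ZMod n) (a : A) :
    Tmap (bockstein φ) a = φ a := by
  haveI : NeZero n := ⟨hn.ne'⟩
  have hz : (n : ℤ) ≠ 0 := by exact_mod_cast hn.ne'
  have hstep : ∀ j : ℕ, a + j • a = (j + 1) • a := by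
    intro j; rw [succ_nsmul, add_comm]
  have key : ∑ j ∈ range n, kInt φ a (j • a) = ((φ a).val : ℤ) := by
    apply mul_left_cancel₀ hz
    rw [Finset.mul_sum]
    calc ∑ j ∈ range n, (n : ℤ) * kInt φ a (j • a)
        = ∑ j ∈ range n, eInt φ a (j • a) := by
          apply Finset.sum_congr rfl; intro j _; rw [nk hn]
      _ = ∑ j ∈ range n, (((φ a).val : ℤ)
            + (((φ (j • a)).val : ℤ) - ((φ ((j + 1) • a)).val : ℤ))) := by
          apply Finset.sum_congr rfl; intro j _
          rw [eInt, hstep j]; ring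
      _ = n • ((φ a).val : ℤ) + (((φ (0 • a)).val : ℤ) - ((φ (n • a)).val : ℤ)) := by
          rw [Finset.sum_add_distrib, Finset.sum_const, card_range, Finset.sum_range_sub']
      _ = (n : ℤ) * ((φ a).val : ℤ) := by
          rw [zero_nsmul, hexp, map_zero, ZMod.val_zero, nsmul_eq_mul]
          simp
  simp only [Tmap, bockstein_eq_k]
  rw [← Int.cast_sum, key, Int.cast_natCast]
  exact ZMod.natCast_rightInverse _

end Aux3

open Stmt3 in
/-- For odd `n` and `A` a finite abelian group of exponent dividing `n`,
`H²(A, ℤ/n) ≅ Hom(A,ℤ/n) × (Hom(A ⊗ A, ℤ/n)/Sym)` as `Aut(A)`-modules, where the first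
factor maps in by the Bockstein and the second by regarding a bilinear form as a 2-cocycle:
(i) `Φ(φ,β)` is a cocycle; (ii) every cocycle is cohomologous to some `Φ(φ,β)`;
(iii) `Φ(φ,β)` is a coboundary iff `φ = 0` and `β` is symmetric; (iv) `Φ` is
`Aut(A)`-equivariant. -/
theorem stmt_3 (A : Type*) [AddCommGroup A] [Finite A] (n : ℕ) (hodd : Odd n)
    (hn : 0 < n) (hexp : ∀ a : A, n • a = 0) :
    (∀ (φ : A →+ ZMod n) (β : A →+ A →+ ZMod n), IsCocycle2 (Phi φ β)) ∧
    (∀ c : A → A → ZMod n, IsCocycle2 c →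
      ∃ (φ : A →+ ZMod n) (β : A →+ A →+ ZMod n),
        IsCoboundary2 (fun a b => c a b - Phi φ β a b)) ∧
    (∀ (φ : A →+ ZMod n) (β : A →+ A →+ ZMod n),
      IsCoboundary2 (Phi φ β) ↔ (φ = 0 ∧ ∀ a b : A, β a b = β b a)) ∧
    (∀ (σ : A ≃+ A) (φ : A →+ ZMod n) (β : A →+ A →+ ZMod n) (a b : A),
      Phi (φ.comp σ.toAddMonoidHom)
          (((β.comp σ.toAddMonoidHom).flip.comp σ.toAddMonoidHom).flip) a b
        = Phi φ β (σ a) (σ b)) := by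
  haveI : NeZero n := ⟨hn.ne'⟩
  obtain ⟨m, hm⟩ := hodd
  have hodd' : Odd n := ⟨m, hm⟩
  set u : ZMod n := ((m + 1 : ℕ) : ZMod n) with hu_def
  have h2u : (2 : ZMod n) * u = 1 := by
    have h1 : ((2 * (m + 1) : ℕ) : ZMod n) = ((n + 1 : ℕ) : ZMod n) := by
      congr 1; omega
    push_cast at h1
    rw [ZMod.natCast_self, zero_add] at h1
    rw [hu_def]; push_cast; linear_combination h1
  refine ⟨?_, ?_, ?_, ?_⟩
  · -- (i) Phi is a cocycle
    intro φ β a b d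
    have hb := Aux3.bockstein_cocycle hn φ a b d
    have e1 : β (a + b) d = β a d + β b d := by
      rw [map_add, AddMonoidHom.add_apply]
    have e2 : β a (b + d) = β a b + β a d := map_add (β a) b d
    simp only [Phi]
    linear_combination hb + e2 - e1
  · -- (ii) every cocycle is cohomologous to some Phi φ β
    intro c hc
    have hc0r : ∀ a : A, c a 0 = c 0 0 := by
      intro a
      have h := hc a 0 0
      simp only [add_zero] at h
      linear_combination - h
    have hc0l : ∀ b : A, c 0 b = c 0 0 := by
      intro b
      have h := hc 0 0 b
      simp only [zero_add] at h
      linear_combination h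
    set c1 : A → A → ZMod n := fun a b => c a b - c 0 0 with hc1def
    have hc1 : IsCocycle2 c1 := by
      intro a b d
      have h := hc a b d
      simp only [hc1def]
      linear_combination h
    have hc1r : ∀ a, c1 a 0 = 0 := by
      intro a; simp only [hc1def]; rw [hc0r a, sub_self]
    have hc1l : ∀ b, c1 0 b = 0 := by
      intro b; simp only [hc1def]; rw [hc0l b, sub_self]
    have hd := Aux3.d_add c1 hc1
    set α : A → A → ZMod n := fun a b => u * (c1 a b - c1 b a) with hαdef
    have hα1 : ∀ a a' b : A, α (a + a') b = α a b + α a' b := by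
      intro a a' b
      simp only [hαdef]
      linear_combination u * hd a a' b
    have hα2 : ∀ a b b' : A, α a (b + b') = α a b + α a b' := by
      intro a b b'
      simp only [hαdef]
      linear_combination (-u) * hd b b' a
    set β : A →+ A →+ ZMod n := AddMonoidHom.mk'
        (fun a => AddMonoidHom.mk' (fun b => α a b) (fun b b' => hα2 a b b'))
        (fun a a' => AddMonoidHom.ext fun b => by
          simp only [AddMonoidHom.mk'_apply, AddMonoidHom.add_apply]
          exact hα1 a a' b) with hβdef
    have hβab : ∀ a b : A, β a b = α a b := fun a b => rfl
    have hαc : IsCocycle2 α := by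
      intro a b d
      linear_combination hα2 a b d - hα1 a b d
    set s : A → A → ZMod n := fun a b => c1 a b - α a b with hsdef
    have hsc : IsCocycle2 s := by
      intro a b d
      have h1 := hc1 a b d
      have h2 := hαc a b d
      simp only [hsdef]
      linear_combination h1 - h2
    have hssym : ∀ a b, s a b = s b a := by
      intro a b
      simp only [hsdef, hαdef]
      linear_combination (c1 b a - c1 a b) * h2u
    have hsr : ∀ a, s a 0 = 0 := by
      intro a
      simp only [hsdef, hαdef]
      rw [hc1r a, hc1l a]
      ring
    have hsl : ∀ b, s 0 b = 0 := by
      intro b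
      simp only [hsdef, hαdef]
      rw [hc1r b, hc1l b]
      ring
    have hφadd := Aux3.Tmap_add hexp s hsc hssym hsr hsl
    set φ : A →+ ZMod n := AddMonoidHom.mk' (Aux3.Tmap s) hφadd with hφdef
    have hφap : ∀ a : A, φ a = Aux3.Tmap s a := fun a => rfl
    set t : A → A → ZMod n := fun a b => s a b - bockstein φ a b with htdef
    have htc : IsCocycle2 t := by
      intro a b d
      have h1 := hsc a b d
      have h2 := Aux3.bockstein_cocycle hn φ a b d
      simp only [htdef]
      linear_combination h1 - h2
    have htsym : ∀ a b, t a b = t b a := by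
      intro a b
      simp only [htdef]
      rw [hssym a b, Aux3.bockstein_symm φ a b]
    have htr : ∀ a, t a 0 = 0 := by
      intro a
      simp only [htdef]
      rw [hsr a, Aux3.bockstein_zero_right hn φ a, sub_self]
    have htl : ∀ b, t 0 b = 0 := by
      intro b
      simp only [htdef]
      rw [hsl b, Aux3.bockstein_zero_left hn φ b, sub_self]
    have hTt : ∀ a, Aux3.Tmap t a = 0 := by
      intro a
      have h1 : Aux3.Tmap t a = Aux3.Tmap s a - Aux3.Tmap (bockstein φ) a := by
        simp only [htdef]
        exact Aux3.Tmap_sub s (bockstein φ) a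
      rw [h1, Aux3.Tmap_bockstein hn hexp φ a, hφap a, sub_self]
    obtain ⟨g, hg⟩ := Aux3.split hn hexp t htc htsym htr htl hTt
    refine ⟨φ, β, fun a => g a + c 0 0, ?_⟩
    intro a b
    have h := hg a b
    simp only [htdef, hsdef, hc1def] at h
    show c a b - Phi φ β a b = (g a + c 0 0) + (g b + c 0 0) - (g (a + b) + c 0 0)
    simp only [Phi]
    rw [hβab a b]
    linear_combination h
  · -- (iii) coboundary iff φ = 0 and β symmetric
    intro φ β
    constructor
    · rintro ⟨g, hg⟩
      constructor
      · ext a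
        have h1 : Aux3.Tmap (Phi φ β) a = φ a := by
          have hsplit : Aux3.Tmap (Phi φ β) a
              = Aux3.Tmap (bockstein φ) a + Aux3.Tmap (fun a b => β a b) a := by
            simp only [Phi, Aux3.Tmap]
            rw [← Finset.sum_add_distrib]
          rw [hsplit, Aux3.Tmap_bockstein hn hexp φ a, Aux3.Tmap_bilin hodd' hexp β a,
            add_zero]
        have h2 : Aux3.Tmap (Phi φ β) a = 0 := by
          have hfe : Phi φ β = fun a b => g a + g b - g (a + b) :=
            funext fun x => funext fun y => hg x y
          rw [hfe]
          exact Aux3.Tmap_coboundary hexp g a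
        simp only [AddMonoidHom.zero_apply]
        rw [← h1, h2]
      · intro a b
        have h1 := hg a b
        have h2 := hg b a
        rw [add_comm b a] at h2
        have h3 := Aux3.bockstein_symm φ a b
        simp only [Phi] at h1 h2
        linear_combination h1 - h2 - h3
    · rintro ⟨hφ0, hβs⟩
      refine ⟨fun a => -(u * β a a), ?_⟩
      intro a b
      have hb0 : bockstein φ a b = 0 := by
        rw [hφ0]
        haveI : NeZero n := ⟨hn.ne'⟩
        simp [bockstein]
      have hexp2 : β (a + b) (a + b) = β a a + β a b + β b a + β b b := by
        have hh : β (a + b) = β a + β b := map_add β a b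
        rw [hh, AddMonoidHom.add_apply, map_add (β a) a b, map_add (β b) a b]
        ring
      simp only [Phi]
      rw [hb0, zero_add]
      linear_combination (-u) * hexp2 + (-u) * hβs b a + (-(β a b)) * h2u
  · -- (iv) equivariance
    intro σ φ β a b
    simp only [Phi, bockstein, AddMonoidHom.comp_apply, AddMonoidHom.flip_apply,
      AddEquiv.coe_toAddMonoidHom, map_add]
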